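/- For n even, let G be obtained from the complete bipartite graph K_{n/2, n/2} by deleting one vertex v from one part, adding v back, and joining v to ⌊αn/2⌋ − 1 vertices of one part and n/2 − ⌊αn/2⌋ + 2 vertices of the other part, where α ∈ (1/2, 1). Then G has n vertices, at least ⌊n²/4⌋ + 1 edges, every edge of G lies in fewer than αn/2 triangles, and the number of triangles in G is at most α(1−α)n²/4 + O(n). -/

import Mathlib

attribute [local instance] Classical.propDecidable

/-- `K_{m,m}` on `Fin (2m)` (parts `{i < m}`, `{i ≥ m}`) with the vertex `0` detached from
the second part and instead joined to the `k - 1` vertices `1, …, k-1` of the first part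
and the `m - k + 2` vertices `m, …, 2m-k+1` of the second part. -/
noncomputable def thm1Example (m k : ℕ) : SimpleGraph (Fin (2 * m)) :=
  SimpleGraph.fromRel (fun i j =>
    ((i : ℕ) ≠ 0 ∧ (i : ℕ) < m ∧ ¬ ((j : ℕ) < m)) ∨
    ((i : ℕ) = 0 ∧ ((1 ≤ (j : ℕ) ∧ (j : ℕ) < k) ∨
      (m ≤ (j : ℕ) ∧ (j : ℕ) < 2 * m - k + 2))))

lemma thm1_adj {m k : ℕ} (u v : Fin (2*m)) :
    (thm1Example m k).Adj u v ↔ (u:ℕ) ≠ (v:ℕ) ∧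
      ( ((u:ℕ) = 0 ∧ ((1 ≤ (v:ℕ) ∧ (v:ℕ) < k) ∨ (m ≤ (v:ℕ) ∧ (v:ℕ) < 2*m-k+2)))
      ∨ ((v:ℕ) = 0 ∧ ((1 ≤ (u:ℕ) ∧ (u:ℕ) < k) ∨ (m ≤ (u:ℕ) ∧ (u:ℕ) < 2*m-k+2)))
      ∨ ((u:ℕ) ≠ 0 ∧ (u:ℕ) < m ∧ m ≤ (v:ℕ))
      ∨ ((v:ℕ) ≠ 0 ∧ (v:ℕ) < m ∧ m ≤ (u:ℕ))) := by
  simp only [thm1Example, SimpleGraph.fromRel_adj, ne_eq, ← Fin.val_eq_val]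
  constructor <;> rintro ⟨h1, h2⟩ <;> exact ⟨h1, by omega⟩

lemma tswap23 {α : Type*} [DecidableEq α] (a b c : α) :
    ({a, b, c} : Finset α) = {a, c, b} := by
  ext w; simp only [Finset.mem_insert, Finset.mem_singleton]; tauto

lemma tswap12 {α : Type*} [DecidableEq α] (a b c : α) :
    ({a, b, c} : Finset α) = {b, a, c} := Finset.insert_comm a b {c}

lemma thm1_tri_struct {m k : ℕ} (hk : 2 ≤ k) (hkm : k < m) (h2m : 0 < 2*m)
    {t : Finset (Fin (2*m))} (ht : t ∈ (thm1Example m k).cliqueFinset 3) :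
    ∃ a b : Fin (2*m), t = {⟨0, h2m⟩, a, b} ∧
      1 ≤ (a:ℕ) ∧ (a:ℕ) < k ∧ m ≤ (b:ℕ) ∧ (b:ℕ) < 2*m-k+2 := by
  rw [SimpleGraph.mem_cliqueFinset_iff, SimpleGraph.isNClique_iff] at ht
  obtain ⟨hcl, hcard⟩ := ht
  obtain ⟨x, y, z, hxy, hxz, hyz, rfl⟩ := Finset.card_eq_three.mp hcard
  have axy : (thm1Example m k).Adj x y := hcl (by simp) (by simp) hxy
  have axz : (thm1Example m k).Adj x z := hcl (by simp) (by simp) hxz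
  have ayz : (thm1Example m k).Adj y z := hcl (by simp) (by simp) hyz
  rw [thm1_adj] at axy axz ayz
  obtain ⟨exy, dxy⟩ := axy
  obtain ⟨exz, dxz⟩ := axz
  obtain ⟨eyz, dyz⟩ := ayz
  have h0 : (x:ℕ) = 0 ∨ (y:ℕ) = 0 ∨ (z:ℕ) = 0 := by omega
  rcases h0 with h0 | h0 | h0
  · have hx : x = ⟨0, h2m⟩ := Fin.ext h0
    subst hx
    have hcr : ((y:ℕ) < m ∧ m ≤ (z:ℕ)) ∨ ((z:ℕ) < m ∧ m ≤ (y:ℕ)) := by omega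
    rcases hcr with hcr | hcr
    · exact ⟨y, z, rfl, by omega, by omega, by omega, by omega⟩
    · exact ⟨z, y, tswap23 _ y z, by omega, by omega, by omega, by omega⟩
  · have hy : y = ⟨0, h2m⟩ := Fin.ext h0
    subst hy
    have hcr : ((x:ℕ) < m ∧ m ≤ (z:ℕ)) ∨ ((z:ℕ) < m ∧ m ≤ (x:ℕ)) := by omega
    rcases hcr with hcr | hcr
    · exact ⟨x, z, tswap12 x _ z, by omega, by omega, by omega, by omega⟩
    · exact ⟨z, x, (tswap12 x _ z).trans (tswap23 _ x z), by omega, by omega, by omega,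
        by omega⟩
  · have hz : z = ⟨0, h2m⟩ := Fin.ext h0
    subst hz
    have hcr : ((x:ℕ) < m ∧ m ≤ (y:ℕ)) ∨ ((y:ℕ) < m ∧ m ≤ (x:ℕ)) := by omega
    rcases hcr with hcr | hcr
    · exact ⟨x, y, (tswap23 x y _).trans (tswap12 x _ y), by omega, by omega, by omega,
        by omega⟩
    · exact ⟨y, x, ((tswap23 x y _).trans (tswap12 x _ y)).trans (tswap23 _ x y),
        by omega, by omega, by omega, by omega⟩
lemma thm1_tri_count {m k : ℕ} (hk : 2 ≤ k) (hkm : k < m) :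
    ((thm1Example m k).cliqueFinset 3).card ≤ (k - 1) * (m - k + 2) := by
  have h2m : 0 < 2*m := by omega
  have hsum : ∀ a b : Fin (2*m), 1 ≤ (a:ℕ) → (a:ℕ) < k → m ≤ (b:ℕ) → (b:ℕ) < 2*m-k+2 →
      (∑ w ∈ ({⟨0, h2m⟩, a, b} : Finset (Fin (2*m))),
        (if (w:ℕ) < m then (w:ℕ) else 0) = (a:ℕ)) ∧
      (∑ w ∈ ({⟨0, h2m⟩, a, b} : Finset (Fin (2*m))),
        (if m ≤ (w:ℕ) then (w:ℕ) else 0) = (b:ℕ)) := by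
    intro a b ha1 hak hbm hb2
    have hz0v : ((⟨0, h2m⟩ : Fin (2*m)) : ℕ) = 0 := rfl
    have h1 : (⟨0, h2m⟩ : Fin (2*m)) ∉ ({a, b} : Finset (Fin (2*m))) := by
      simp only [Finset.mem_insert, Finset.mem_singleton]
      push_neg
      exact ⟨Fin.ne_of_val_ne (by omega), Fin.ne_of_val_ne (by omega)⟩
    have h2 : a ∉ ({b} : Finset (Fin (2*m))) := by
      simp only [Finset.mem_singleton]
      exact Fin.ne_of_val_ne (by omega)
    constructor
    · rw [Finset.sum_insert h1, Finset.sum_insert h2, Finset.sum_singleton]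
      split_ifs <;> omega
    · rw [Finset.sum_insert h1, Finset.sum_insert h2, Finset.sum_singleton]
      split_ifs <;> omega
  calc ((thm1Example m k).cliqueFinset 3).card
      ≤ (Finset.Ico 1 k ×ˢ Finset.Ico m (2*m-k+2)).card := by
        refine Finset.card_le_card_of_injOn
          (fun t => (∑ w ∈ t, (if (w:ℕ) < m then (w:ℕ) else 0),
                     ∑ w ∈ t, (if m ≤ (w:ℕ) then (w:ℕ) else 0))) ?_ ?_
        · intro t ht
          obtain ⟨a, b, rfl, ha1, hak, hbm, hb2⟩ := thm1_tri_struct hk hkm h2m ht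
          obtain ⟨e1, e2⟩ := hsum a b ha1 hak hbm hb2
          simp only [Finset.mem_coe, Finset.mem_product, Finset.mem_Ico, e1, e2]
          omega
        · intro t ht t' ht' heq
          obtain ⟨a, b, rfl, ha1, hak, hbm, hb2⟩ := thm1_tri_struct hk hkm h2m ht
          obtain ⟨a', b', rfl, ha1', hak', hbm', hb2'⟩ := thm1_tri_struct hk hkm h2m ht'
          obtain ⟨e1, e2⟩ := hsum a b ha1 hak hbm hb2
          obtain ⟨e1', e2'⟩ := hsum a' b' ha1' hak' hbm' hb2'
          simp only [e1, e2, e1', e2', Prod.mk.injEq] at heq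
          rw [Fin.ext heq.1, Fin.ext heq.2]
    _ = (k - 1) * (m - k + 2) := by
        rw [Finset.card_product, Nat.card_Ico, Nat.card_Ico]
        congr 1
        omega
open Fin.NatCast in
lemma thm1_edges {m k : ℕ} (hk : 2 ≤ k) (hkm : k < m) :
    m * m + 1 ≤ (thm1Example m k).edgeFinset.card := by
  haveI : NeZero (2*m) := ⟨by omega⟩
  set S : Finset (ℕ × ℕ) :=
    (Finset.Ico 1 m ×ˢ Finset.Ico m (2*m)) ∪
    ({0} ×ˢ (Finset.Ico 1 k ∪ Finset.Ico m (2*m-k+2))) with hS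
  have hmemS : ∀ p ∈ S, (1 ≤ p.1 ∧ p.1 < m ∧ m ≤ p.2 ∧ p.2 < 2*m) ∨
      (p.1 = 0 ∧ ((1 ≤ p.2 ∧ p.2 < k) ∨ (m ≤ p.2 ∧ p.2 < 2*m-k+2))) := by
    intro p hp
    simp only [hS, Finset.mem_union, Finset.mem_product, Finset.mem_Ico,
      Finset.mem_singleton] at hp
    omega
  have hcard : S.card = m * m + 1 := by
    have hd : Disjoint (Finset.Ico 1 m ×ˢ Finset.Ico m (2*m))
        ({0} ×ˢ (Finset.Ico 1 k ∪ Finset.Ico m (2*m-k+2))) := by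
      rw [Finset.disjoint_left]
      rintro ⟨a, b⟩ h1 h2
      simp only [Finset.mem_product, Finset.mem_Ico, Finset.mem_singleton] at h1 h2
      omega
    have hd2 : Disjoint (Finset.Ico 1 k) (Finset.Ico m (2*m-k+2)) := by
      rw [Finset.disjoint_left]; intro a h1 h2
      simp only [Finset.mem_Ico] at h1 h2; omega
    rw [hS, Finset.card_union_of_disjoint hd, Finset.card_product, Finset.card_product,
      Finset.card_union_of_disjoint hd2]
    simp only [Nat.card_Ico, Finset.card_singleton]
    obtain ⟨m', rfl⟩ : ∃ m', m = m' + 1 := ⟨m - 1, by omega⟩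
    have h1 : m' + 1 - 1 = m' := by omega
    have h2 : k - 1 + (2 * (m' + 1) - k + 2 - (m' + 1)) = m' + 2 := by omega
    have h3 : 2 * (m' + 1) - (m' + 1) = m' + 1 := by omega
    rw [h1, h2, h3]; ring
  calc m * m + 1 = S.card := hcard.symm
    _ ≤ (thm1Example m k).edgeFinset.card := by
      refine Finset.card_le_card_of_injOn
        (fun p => s((p.1 : Fin (2*m)), (p.2 : Fin (2*m)))) ?_ ?_
      · intro p hp
        rcases hmemS p hp with h | h
        · have e1 : ((p.1 : Fin (2*m)) : ℕ) = p.1 := Fin.val_cast_of_lt (by omega)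
          have e2 : ((p.2 : Fin (2*m)) : ℕ) = p.2 := Fin.val_cast_of_lt (by omega)
          simp only [Finset.mem_coe, SimpleGraph.mem_edgeFinset, SimpleGraph.mem_edgeSet]
          rw [thm1_adj, e1, e2]; omega
        · have e1 : ((p.1 : Fin (2*m)) : ℕ) = p.1 := Fin.val_cast_of_lt (by omega)
          have e2 : ((p.2 : Fin (2*m)) : ℕ) = p.2 := Fin.val_cast_of_lt (by omega)
          simp only [Finset.mem_coe, SimpleGraph.mem_edgeFinset, SimpleGraph.mem_edgeSet]
          rw [thm1_adj, e1, e2]; omega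
      · intro p hp q hq hpq
        have hplt : p.1 < p.2 ∧ p.1 < 2*m ∧ p.2 < 2*m := by
          rcases hmemS p hp with h | h <;> omega
        have hqlt : q.1 < q.2 ∧ q.1 < 2*m ∧ q.2 < 2*m := by
          rcases hmemS q hq with h | h <;> omega
        simp only [Sym2.eq_iff] at hpq
        have e1 : ((p.1 : Fin (2*m)) : ℕ) = p.1 := Fin.val_cast_of_lt (by omega)
        have e2 : ((p.2 : Fin (2*m)) : ℕ) = p.2 := Fin.val_cast_of_lt (by omega)
        have e3 : ((q.1 : Fin (2*m)) : ℕ) = q.1 := Fin.val_cast_of_lt (by omega)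
        have e4 : ((q.2 : Fin (2*m)) : ℕ) = q.2 := Fin.val_cast_of_lt (by omega)
        have : (p.1 = q.1 ∧ p.2 = q.2) ∨ (p.1 = q.2 ∧ p.2 = q.1) := by
          rcases hpq with ⟨ha, hb⟩ | ⟨ha, hb⟩
          · left; constructor
            · rw [← e1, ← e3, ha]
            · rw [← e2, ← e4, hb]
          · right; constructor
            · rw [← e1, ← e4, ha]
            · rw [← e2, ← e3, hb]
        have : p.1 = q.1 ∧ p.2 = q.2 := by omega
        exact Prod.ext this.1 this.2
lemma card_le_of_bounds {n a b : ℕ} (s : Finset (Fin n))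
    (h : ∀ w ∈ s, a ≤ (w:ℕ) ∧ (w:ℕ) < b) : s.card ≤ b - a := by
  calc s.card ≤ (Finset.Ico a b).card := by
        refine Finset.card_le_card_of_injOn (fun w => (w:ℕ)) ?_ ?_
        · intro w hw; simp only [Finset.mem_coe, Finset.mem_Ico]; exact h w hw
        · intro x _ y _ hxy; exact Fin.val_injective hxy
    _ = b - a := Nat.card_Ico a b
lemma thm1_codeg {m k : ℕ} (hk : 2 ≤ k) (hkm : k < m) {u v : Fin (2*m)}
    (h : (thm1Example m k).Adj u v) :
    ((thm1Example m k).neighborFinset u ∩ (thm1Example m k).neighborFinset v).card ≤ k - 1 ∨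
    ((thm1Example m k).neighborFinset u ∩ (thm1Example m k).neighborFinset v).card ≤
      m - k + 2 := by
  set N := (thm1Example m k).neighborFinset u ∩ (thm1Example m k).neighborFinset v with hN
  have hmemN : ∀ w ∈ N, (u:ℕ) ≠ (w:ℕ) ∧ (v:ℕ) ≠ (w:ℕ) ∧
      ( ((u:ℕ) = 0 ∧ ((1 ≤ (w:ℕ) ∧ (w:ℕ) < k) ∨ (m ≤ (w:ℕ) ∧ (w:ℕ) < 2*m-k+2)))
      ∨ ((w:ℕ) = 0 ∧ ((1 ≤ (u:ℕ) ∧ (u:ℕ) < k) ∨ (m ≤ (u:ℕ) ∧ (u:ℕ) < 2*m-k+2)))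
      ∨ ((u:ℕ) ≠ 0 ∧ (u:ℕ) < m ∧ m ≤ (w:ℕ))
      ∨ ((w:ℕ) ≠ 0 ∧ (w:ℕ) < m ∧ m ≤ (u:ℕ))) ∧
      ( ((v:ℕ) = 0 ∧ ((1 ≤ (w:ℕ) ∧ (w:ℕ) < k) ∨ (m ≤ (w:ℕ) ∧ (w:ℕ) < 2*m-k+2)))
      ∨ ((w:ℕ) = 0 ∧ ((1 ≤ (v:ℕ) ∧ (v:ℕ) < k) ∨ (m ≤ (v:ℕ) ∧ (v:ℕ) < 2*m-k+2)))
      ∨ ((v:ℕ) ≠ 0 ∧ (v:ℕ) < m ∧ m ≤ (w:ℕ))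
      ∨ ((w:ℕ) ≠ 0 ∧ (w:ℕ) < m ∧ m ≤ (v:ℕ))) := by
    intro w hw
    rw [hN, Finset.mem_inter, SimpleGraph.mem_neighborFinset,
      SimpleGraph.mem_neighborFinset, thm1_adj, thm1_adj] at hw
    exact ⟨hw.1.1, hw.2.1, hw.1.2, hw.2.2⟩
  rw [thm1_adj] at h
  obtain ⟨hne, hcase⟩ := h
  rcases hcase with ⟨hu0, hv1 | hv2⟩ | ⟨hv0, hu1 | hu2⟩ | hcr | hcr
  · -- u = 0, v ∈ [1,k): common nbrs in [m, 2m-k+2)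
    right
    have := card_le_of_bounds (a:=m) (b:=2*m-k+2) N (fun w hw => by have := hmemN w hw; omega)
    omega
  · -- u = 0, v ∈ [m, 2m-k+2): common nbrs in [1, k)
    left
    have := card_le_of_bounds (a:=1) (b:=k) N (fun w hw => by have := hmemN w hw; omega)
    omega
  · right
    have := card_le_of_bounds (a:=m) (b:=2*m-k+2) N (fun w hw => by have := hmemN w hw; omega)
    omega
  · left
    have := card_le_of_bounds (a:=1) (b:=k) N (fun w hw => by have := hmemN w hw; omega)
    omega
  · -- cross edge: common nbrs ⊆ {0}
    right
    have := card_le_of_bounds (a:=0) (b:=1) N (fun w hw => by have := hmemN w hw; omega)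
    omega
  · right
    have := card_le_of_bounds (a:=0) (b:=1) N (fun w hw => by have := hmemN w hw; omega)
    omega

/-- Sharpness of Theorem 1: for `α ∈ (1/2, 1)` and `n = 2m` large, the modified complete
bipartite graph (with `k = ⌊αn/2⌋`) has at least `⌊n²/4⌋ + 1` edges, every edge in fewer
than `αn/2` triangles, and at most `α(1-α)n²/4 + O(n)` triangles. -/
theorem thm1_example_properties (α : ℝ) (hα₁ : 1 / 2 < α) (hα₂ : α < 1) :
    ∃ C : ℝ, 0 < C ∧ ∃ n₀ : ℕ, ∀ m : ℕ, n₀ ≤ m →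
      (2 * m) ^ 2 / 4 + 1 ≤ (thm1Example m ⌊α * m⌋₊).edgeFinset.card ∧
      (∀ u v : Fin (2 * m), (thm1Example m ⌊α * m⌋₊).Adj u v →
        (((thm1Example m ⌊α * m⌋₊).neighborFinset u ∩
          (thm1Example m ⌊α * m⌋₊).neighborFinset v).card : ℝ) < α * (2 * m) / 2) ∧
      ((((thm1Example m ⌊α * m⌋₊).cliqueFinset 3).card : ℝ) ≤
        α * (1 - α) * (2 * m) ^ 2 / 4 + C * (2 * m)) := by
  refine ⟨2, by norm_num, ⌈4/(2*α-1)⌉₊ + 4, fun m hm => ?_⟩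
  have h2a : (0:ℝ) < 2*α - 1 := by linarith
  have hm4 : 4 ≤ m := by omega
  have hmr4 : (4:ℝ) ≤ m := by exact_mod_cast hm4
  have hmR : (4:ℝ)/(2*α-1) < m := by
    have h1 : (4:ℝ)/(2*α-1) ≤ (⌈(4:ℝ)/(2*α-1)⌉₊ : ℝ) := Nat.le_ceil _
    have h2 : (⌈(4:ℝ)/(2*α-1)⌉₊ : ℝ) + 1 ≤ m := by
      have h3 : ⌈(4:ℝ)/(2*α-1)⌉₊ + 1 ≤ m := by omega
      exact_mod_cast h3
    linarith
  have hm3 : (3:ℝ) < (2*α-1) * m := by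
    have h4 := (div_lt_iff₀ h2a).mp hmR
    linarith
  set k := ⌊α * m⌋₊ with hkdef
  have hαm0 : (0:ℝ) ≤ α * m := by positivity
  have hkle : (k:ℝ) ≤ α * m := Nat.floor_le hαm0
  have hklt : α * m < (k:ℝ) + 1 := Nat.lt_floor_add_one _
  have hk2 : 2 ≤ k := by
    apply Nat.le_floor
    push_cast
    nlinarith
  have hkm : k < m := by
    have h5 : (k:ℝ) < m := by nlinarith
    exact_mod_cast h5
  refine ⟨?_, ?_, ?_⟩
  · have h6 := thm1_edges hk2 hkm
    have hsq : (2*m)^2 = (m*m)*4 := by ring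
    omega
  · intro u v huv
    have hco := thm1_codeg hk2 hkm huv
    have hgoal : α * (2*(m:ℝ))/2 = α * m := by ring
    rcases hco with h | h
    · have h7 : ((((thm1Example m k).neighborFinset u ∩
          (thm1Example m k).neighborFinset v).card : ℕ) : ℝ) ≤ ((k - 1 : ℕ) : ℝ) := by
        exact_mod_cast h
      rw [Nat.cast_sub (by omega)] at h7
      push_cast
      push_cast at h7
      linarith
    · have h7 : ((((thm1Example m k).neighborFinset u ∩
          (thm1Example m k).neighborFinset v).card : ℕ) : ℝ) ≤ ((m - k + 2 : ℕ) : ℝ) := by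
        exact_mod_cast h
      rw [Nat.cast_add, Nat.cast_sub (by omega)] at h7
      push_cast
      push_cast at h7
      nlinarith
  · have hcount := thm1_tri_count hk2 hkm
    have h8 : ((((thm1Example m k).cliqueFinset 3).card : ℕ) : ℝ) ≤
        (((k - 1) * (m - k + 2) : ℕ) : ℝ) := by exact_mod_cast hcount
    rw [Nat.cast_mul, Nat.cast_sub (by omega), Nat.cast_add, Nat.cast_sub (by omega)] at h8
    push_cast at h8
    push_cast
    have hfac1 : ((k:ℝ) - 1) * ((m:ℝ) - k + 2) ≤ (α*m - 1) * ((m:ℝ) - k + 2) := by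
      apply mul_le_mul_of_nonneg_right (by linarith)
      have : (k:ℝ) < m := by exact_mod_cast hkm
      linarith
    have hfac2 : (α*m - 1) * ((m:ℝ) - k + 2) ≤ (α*m - 1) * ((m:ℝ) - α*m + 3) := by
      apply mul_le_mul_of_nonneg_left (by linarith)
      nlinarith
    nlinarith
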